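/- arXiv:1310.4917 — 2 statements merged into one kernel-verified Lean document; each statement's English description precedes it below -/
import Mathlib

section
/- Every generalized evolutionary system possesses a weak pullback attractor A_w(t), and A_w(t) = Ω_w(X,t). Moreover, if the strong pullback attractor A_s(t) exists, then the weak closure of A_s(t) equals A_w(t). -/
open Filter Topology MeasureTheory

variable {X : Type*}

/-- Convergence of a sequence with respect to a distance function `d`. -/
def Conv (d : X → X → ℝ) (u : ℕ → X) (x : X) : Prop :=
  ∀ ε > 0, ∃ N, ∀ n ≥ N, d (u n) x < ε

/-- The `d`-distance between two paired sequences tends to zero. -/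
def DistTendsZero (d : X → X → ℝ) (u v : ℕ → X) : Prop :=
  ∀ ε > 0, ∃ N, ∀ n ≥ N, d (u n) (v n) < ε

/-- Sequential closure of a set with respect to the distance `d`. -/
def SeqClosure (d : X → X → ℝ) (A : Set X) : Set X :=
  {x | ∃ u : ℕ → X, (∀ n, u n ∈ A) ∧ Conv d u x}

/-- Sequential closedness with respect to the distance `d`. -/
def SeqClosed (d : X → X → ℝ) (A : Set X) : Prop :=
  SeqClosure d A ⊆ A

/-- Sequential compactness of a set with respect to the distance `d`. -/
def SeqCompactIn (d : X → X → ℝ) (A : Set X) : Prop :=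
  ∀ u : ℕ → X, (∀ n, u n ∈ A) →
    ∃ x ∈ A, ∃ φ : ℕ → ℕ, StrictMono φ ∧ Conv d (u ∘ φ) x

/-- `d` is a metric on `X`. -/
def IsMetric (d : X → X → ℝ) : Prop :=
  (∀ x y, 0 ≤ d x y) ∧ (∀ x y, d x y = 0 ↔ x = y) ∧ (∀ x y, d x y = d y x) ∧
  (∀ x y z, d x z ≤ d x y + d y z)

/-- Uniform convergence of trajectories on each compact subinterval `[s,T]`,
i.e. convergence in `C([s,∞);X)` with distance `d` on `X`. -/
def ConvTraj (d : X → X → ℝ) (s : ℝ) (u : ℕ → ℝ → X) (v : ℝ → X) : Prop :=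
  ∀ T : ℝ, ∀ ε > 0, ∃ N, ∀ n ≥ N, ∀ r ∈ Set.Icc s T, d (u n r) (v r) < ε

/-- A generalized evolutionary system: to each interval `[s,∞)` it assigns a
nonempty set of trajectories (encoded as functions `ℝ → X`, only the values on
`[s,∞)` being relevant), closed under restriction to later starting times. -/
structure GES (X : Type*) where
  traj : ℝ → Set (ℝ → X)
  nonempty : ∀ s : ℝ, (traj s).Nonempty
  mono : ∀ ⦃s s' : ℝ⦄, s ≤ s' → traj s ⊆ traj s'

namespace GES

variable (E : GES X)

/-- Complete trajectories: those whose restriction to every `[T,∞)` is a trajectory. -/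
def complete : Set (ℝ → X) := {u | ∀ T : ℝ, u ∈ E.traj T}

/-- `P(t,s)A = {u(t) : u ∈ E([s,∞)), u(s) ∈ A}`. -/
def P (t s : ℝ) (A : Set X) : Set X :=
  {x | ∃ u ∈ E.traj s, u s ∈ A ∧ u t = x}

/-- `P̃(t,s)A = {u(t) : u ∈ E((-∞,∞)), u(s) ∈ A}`. -/
def Ptil (t s : ℝ) (A : Set X) : Set X :=
  {x | ∃ u ∈ E.complete, u s ∈ A ∧ u t = x}

/-- The pullback omega-limit `Ω_d(A,t) = ⋂_{s≤t} cl_d(⋃_{r≤s} P(t,r)A)`. -/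
def Omega (d : X → X → ℝ) (A : Set X) (t : ℝ) : Set X :=
  ⋂ s ∈ Set.Iic t, SeqClosure d (⋃ r ∈ Set.Iic s, E.P t r A)

/-- The family `Afam` pullback attracts the set `B` in the metric `d`. -/
def PullbackAttracts (d : X → X → ℝ) (Afam : ℝ → Set X) (B : Set X) : Prop :=
  ∀ t : ℝ, ∀ ε > 0, ∃ s0 ≤ t, ∀ s ≤ s0, ∀ x ∈ E.P t s B, ∃ a ∈ Afam t, d x a < ε

/-- The `d`-pullback attractor: a family of `d`-closed, `d`-pullback attracting
sets which is minimal with respect to these properties. -/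
def IsPullbackAttractor (d : X → X → ℝ) (Afam : ℝ → Set X) : Prop :=
  (∀ t, SeqClosed d (Afam t)) ∧ E.PullbackAttracts d Afam Set.univ ∧
  ∀ B : ℝ → Set X, (∀ t, SeqClosed d (B t)) → E.PullbackAttracts d B Set.univ →
    ∀ t, Afam t ⊆ B t

/-- Pullback asymptotic compactness with respect to `d`. -/
def PullbackAsympCompact (d : X → X → ℝ) : Prop :=
  ∀ t : ℝ, ∀ s : ℕ → ℝ, (∀ n, s n ≤ t) → Tendsto s atTop atBot →
    ∀ x : ℕ → X, (∀ n, x n ∈ E.P t (s n) Set.univ) →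
      ∃ y : X, ∃ φ : ℕ → ℕ, StrictMono φ ∧ Conv d (x ∘ φ) y

/-- Pullback semi-invariance. -/
def PBSemiInv (B : ℝ → Set X) : Prop :=
  ∀ ⦃s t : ℝ⦄, s ≤ t → E.Ptil t s (B s) ⊆ B t

/-- Pullback invariance. -/
def PBInv (B : ℝ → Set X) : Prop :=
  ∀ ⦃s t : ℝ⦄, s ≤ t → E.Ptil t s (B s) = B t

/-- Pullback quasi-invariance. -/
def PBQuasiInv (B : ℝ → Set X) : Prop :=
  ∀ t : ℝ, ∀ b ∈ B t, ∃ u ∈ E.complete, u t = b ∧ ∀ s ≤ t, u s ∈ B s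

/-- Condition A1: `E([s,∞))` is compact in `C([s,∞);X_w)` for each `s`. -/
def A1 (d : X → X → ℝ) : Prop :=
  ∀ s : ℝ, ∀ u : ℕ → ℝ → X, (∀ n, u n ∈ E.traj s) →
    ∃ v ∈ E.traj s, ∃ φ : ℕ → ℕ, StrictMono φ ∧ ConvTraj d s (fun n => u (φ n)) v

end GES

section Aux

variable {X : Type*}

lemma oneDiv_tail {ε : ℝ} (hε : 0 < ε) :
    ∃ N : ℕ, ∀ n ≥ N, (1 : ℝ) / (n + 1) < ε := by
  obtain ⟨N, hN⟩ := exists_nat_one_div_lt hε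
  refine ⟨N, fun n hn => lt_of_le_of_lt ?_ hN⟩
  apply one_div_le_one_div_of_le (by positivity)
  have : (N : ℝ) ≤ n := by exact_mod_cast hn
  linarith

lemma conv_trans {ds dw : X → X → ℝ}
    (H : ∀ u v : ℕ → X, DistTendsZero ds u v → DistTendsZero dw u v)
    {u : ℕ → X} {x : X} (h : Conv ds u x) : Conv dw u x :=
  H u (fun _ => x) h

lemma mem_seqClosure_self {d : X → X → ℝ} (hd : IsMetric d) {A : Set X} :
    A ⊆ SeqClosure d A := by
  intro x hx
  exact ⟨fun _ => x, fun _ => hx, fun ε hε => ⟨0, fun n _ => by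
    rw [(hd.2.1 x x).mpr rfl]; exact hε⟩⟩

lemma seqClosure_mono (d : X → X → ℝ) {A B : Set X} (h : A ⊆ B) :
    SeqClosure d A ⊆ SeqClosure d B := by
  rintro x ⟨u, hu, hc⟩
  exact ⟨u, fun n => h (hu n), hc⟩

lemma seqClosure_sub {ds dw : X → X → ℝ}
    (H : ∀ u v : ℕ → X, DistTendsZero ds u v → DistTendsZero dw u v) (A : Set X) :
    SeqClosure ds A ⊆ SeqClosure dw A := by
  rintro x ⟨u, hu, hc⟩
  exact ⟨u, hu, conv_trans H hc⟩

lemma seqClosed_seqClosure {d : X → X → ℝ} (hd : IsMetric d) (A : Set X) :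
    SeqClosed d (SeqClosure d A) := by
  rintro x ⟨u, hu, hc⟩
  -- each u n is in SeqClosure d A; pick a n ∈ A with d (a n) (u n) < 1/(n+1)
  have h1 : ∀ n : ℕ, ∃ a ∈ A, d a (u n) < 1 / (n + 1) := by
    intro n
    obtain ⟨v, hv, hvc⟩ := hu n
    obtain ⟨N, hN⟩ := hvc (1 / (n + 1)) (by positivity)
    exact ⟨v N, hv N, hN N le_rfl⟩
  choose a ha hda using h1
  refine ⟨a, ha, fun ε hε => ?_⟩
  obtain ⟨N1, hN1⟩ := hc (ε / 2) (by linarith)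
  obtain ⟨N2, hN2⟩ := oneDiv_tail (ε := ε / 2) (by linarith)
  refine ⟨max N1 N2, fun n hn => ?_⟩
  have h3 := hd.2.2.2 (a n) (u n) x
  have h4 := hN1 n (le_trans (le_max_left _ _) hn)
  have h5 := lt_trans (hda n) (hN2 n (le_trans (le_max_right _ _) hn))
  linarith

end Aux

/-- every generalized evolutionary system has a weak pullback
attractor, namely `Ω_w(X,t)`; and if a strong pullback attractor exists, its
weak closure is the weak pullback attractor. -/
theorem stmt7 {X : Type*} (E : GES X) (ds dw : X → X → ℝ)
    (hds : IsMetric ds) (hdw : IsMetric dw)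
    (hcompact : SeqCompactIn dw (Set.univ : Set X))
    (H : ∀ u v : ℕ → X, DistTendsZero ds u v → DistTendsZero dw u v) :
    E.IsPullbackAttractor dw (fun t => E.Omega dw Set.univ t) ∧
    (∀ Afam : ℝ → Set X, E.IsPullbackAttractor ds Afam →
      ∀ t : ℝ, SeqClosure dw (Afam t) = E.Omega dw Set.univ t) := by

  classical
  have memOm : ∀ t y, y ∈ E.Omega dw Set.univ t ↔
      ∀ s, s ≤ t → y ∈ SeqClosure dw (⋃ r ∈ Set.Iic s, E.P t r Set.univ) := by
    intro t y
    unfold GES.Omega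
    rw [Set.mem_iInter₂]
    simp only [Set.mem_Iic]
  -- Ω_w is dw-closed
  have hclosed : ∀ t, SeqClosed dw (E.Omega dw Set.univ t) := by
    intro t x hx
    rw [memOm]
    intro s hs
    obtain ⟨u, hu, hc⟩ := hx
    exact seqClosed_seqClosure hdw _
      ⟨u, fun n => (memOm t (u n)).mp (hu n) s hs, hc⟩
  -- Ω_w is dw-pullback attracting
  have hattr : E.PullbackAttracts dw (fun t => E.Omega dw Set.univ t) Set.univ := by
    intro t ε hε
    by_contra hcon
    push_neg at hcon
    have hsel : ∀ n : ℕ, ∃ s ≤ t - (n : ℝ), ∃ x ∈ E.P t s Set.univ,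
        ∀ a ∈ E.Omega dw Set.univ t, ε ≤ dw x a := by
      intro n
      exact hcon (t - n) (sub_le_self t (Nat.cast_nonneg n))
    choose s hs x hx hfar using hsel
    obtain ⟨y, -, φ, hφ, hcy⟩ := hcompact x (fun n => Set.mem_univ _)
    have hyOm : y ∈ E.Omega dw Set.univ t := by
      rw [memOm]
      intro s' hs'
      set N := ⌈t - s'⌉₊ with hN
      have hNs : t - (N : ℝ) ≤ s' := by
        have := Nat.le_ceil (t - s'); linarith
      refine ⟨fun m => x (φ (m + N)), ?_, ?_⟩
      · intro m
        apply Set.mem_iUnion₂.mpr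
        refine ⟨s (φ (m + N)), ?_, hx _⟩
        have h1 : (m + N : ℕ) ≤ φ (m + N) := hφ.le_apply
        have h2 := hs (φ (m + N))
        have h3 : (N : ℝ) ≤ ((φ (m + N) : ℕ) : ℝ) := by
          exact_mod_cast le_trans (Nat.le_add_left N m) h1
        simp only [Set.mem_Iic]
        linarith
      · intro δ hδ
        obtain ⟨M, hM⟩ := hcy δ hδ
        exact ⟨M, fun m hm => hM (m + N) (le_trans hm (Nat.le_add_right _ _))⟩
    obtain ⟨M, hM⟩ := hcy ε hε
    exact absurd (hM M le_rfl) (not_lt.mpr (hfar (φ M) y hyOm))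
  -- Ω_w is minimal among dw-closed dw-attracting families
  have hmin : ∀ B : ℝ → Set X, (∀ t, SeqClosed dw (B t)) →
      E.PullbackAttracts dw B Set.univ → ∀ t, E.Omega dw Set.univ t ⊆ B t := by
    intro B hBc hBa t y hy
    apply hBc t
    have hsel : ∀ n : ℕ, ∃ b ∈ B t, dw b y < 2 / (n + 1) := by
      intro n
      obtain ⟨s0, hs0t, hatt⟩ := hBa t (1 / (n + 1)) (by positivity)
      obtain ⟨u, hu, hc⟩ := (memOm t y).mp hy s0 hs0t
      obtain ⟨N, hN⟩ := hc (1 / (n + 1)) (by positivity)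
      obtain ⟨r, hr, hxP⟩ := Set.mem_iUnion₂.mp (hu N)
      obtain ⟨b, hb, hdb⟩ := hatt r hr _ hxP
      refine ⟨b, hb, ?_⟩
      have htr := hdw.2.2.2 b (u N) y
      have hsym := hdw.2.2.1 b (u N)
      have h5 := hN N le_rfl
      have h6 : (2 : ℝ) / (n + 1) = 1 / (n + 1) + 1 / (n + 1) := by ring
      linarith
    choose b hb hdb using hsel
    refine ⟨b, hb, fun ε hε => ?_⟩
    obtain ⟨N, hN⟩ := oneDiv_tail (ε := ε / 2) (by linarith)
    refine ⟨N, fun n hn => ?_⟩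
    have h1 := hdb n
    have h2 := hN n hn
    have h3 : (2 : ℝ) / (n + 1) = 2 * (1 / (n + 1)) := by ring
    linarith
  refine ⟨⟨hclosed, hattr, hmin⟩, ?_⟩
  intro Afam hA t
  obtain ⟨hAc, hAa, hAmin⟩ := hA
  apply Set.Subset.antisymm
  · -- weak closure of A_s(t) is contained in Ω_w(t)
    have hsub : ∀ s', s' ≤ t →
        Afam t ⊆ SeqClosure ds (⋃ r ∈ Set.Iic s', E.P t r Set.univ) := by
      intro s' hs'
      have hB := hAmin
        (fun t' => if t' = t then SeqClosure ds (⋃ r ∈ Set.Iic s', E.P t r Set.univ)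
          else Afam t') ?_ ?_ t
      · simpa using hB
      · intro t'
        by_cases h : t' = t
        · subst h; simp only [if_pos rfl]; exact seqClosed_seqClosure hds _
        · simp only [if_neg h]; exact hAc t'
      · intro t' ε hε
        by_cases h : t' = t
        · subst h
          refine ⟨s', hs', fun sv hss xv hxP => ?_⟩
          refine ⟨xv, ?_, by rw [(hds.2.1 xv xv).mpr rfl]; exact hε⟩
          simp only [if_pos rfl]
          exact mem_seqClosure_self hds (Set.mem_iUnion₂.mpr ⟨sv, hss, hxP⟩)
        · obtain ⟨s0, hs0, hatt⟩ := hAa t' ε hε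
          refine ⟨s0, hs0, fun sv hss xv hxP => ?_⟩
          obtain ⟨a, ha, hd⟩ := hatt sv hss xv hxP
          exact ⟨a, by simp only [if_neg h]; exact ha, hd⟩
    have hAOm : Afam t ⊆ E.Omega dw Set.univ t := by
      intro a ha
      rw [memOm]
      intro s' hs'
      exact seqClosure_sub H _ (hsub s' hs' ha)
    intro z hz
    exact hclosed t (seqClosure_mono dw hAOm hz)
  · -- Ω_w(t) is contained in the weak closure of A_s(t), by minimality of Ω_w
    apply hmin (fun t' => SeqClosure dw (Afam t'))
    · intro t'; exact seqClosed_seqClosure hdw _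
    · intro t' ε hε
      by_contra hcon
      push_neg at hcon
      have hsel : ∀ n : ℕ, ∃ x a : X, a ∈ Afam t' ∧ ds x a < 1 / (n + 1) ∧
          ∀ b ∈ SeqClosure dw (Afam t'), ε ≤ dw x b := by
        intro n
        obtain ⟨σ, hσt, hatt⟩ := hAa t' (1 / (n + 1)) (by positivity)
        obtain ⟨sv, hss, xv, hxP, hfar⟩ := hcon σ hσt
        obtain ⟨a, ha, hda⟩ := hatt sv hss xv hxP
        exact ⟨xv, a, ha, hda, hfar⟩
      choose x a ha hda hfar using hsel
      have hdtz : DistTendsZero ds x a := by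
        intro δ hδ
        obtain ⟨N, hN⟩ := oneDiv_tail hδ
        exact ⟨N, fun n hn => lt_trans (hda n) (hN n hn)⟩
      obtain ⟨N, hN⟩ := H x a hdtz ε hε
      exact absurd (hN N le_rfl)
        (not_lt.mpr (hfar N (a N) (mem_seqClosure_self hdw (ha N))))
end

section
/- If E is pullback asymptotically compact and A ⊆ X is such that for each t and r ≤ t there is u ∈ E([r,∞)) with u(t) ∈ A, then Ω_s(A,t) is a nonempty strongly compact set that strongly pullback attracts A, and Ω_s(A,t) = Ω_w(A,t). -/
open Filter Topology MeasureTheory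

variable {X : Type*}

section Aux

variable {X : Type*}

/-- The set of limits of sequences `x n ∈ P t (sn n) A` with `sn n ≤ t - n`. -/
def limitSet (E : GES X) (d : X → X → ℝ) (A : Set X) (t : ℝ) : Set X :=
  {y | ∃ sn : ℕ → ℝ, (∀ n, sn n ≤ t - n) ∧
    ∃ x : ℕ → X, (∀ n, x n ∈ E.P t (sn n) A) ∧ Conv d x y}

lemma conv_tail {d : X → X → ℝ} {x : ℕ → X} {y : X} (h : Conv d x y) (N : ℕ) :
    Conv d (fun k => x (k + N)) y := by
  intro ε hε
  obtain ⟨M, hM⟩ := h ε hε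
  exact ⟨M, fun n hn => hM (n + N) (le_trans hn (Nat.le_add_right n N))⟩

lemma conv_subseq {d : X → X → ℝ} {x : ℕ → X} {y : X} (h : Conv d x y)
    {φ : ℕ → ℕ} (hφ : StrictMono φ) : Conv d (x ∘ φ) y := by
  intro ε hε
  obtain ⟨N, hN⟩ := h ε hε
  exact ⟨N, fun n hn => hN (φ n) (le_trans hn hφ.le_apply)⟩

lemma omega_eq_limitSet (E : GES X) (d : X → X → ℝ) (A : Set X) (t : ℝ) :
    E.Omega d A t = limitSet E d A t := by
  ext y
  constructor
  · intro hy
    simp only [GES.Omega, Set.mem_iInter, Set.mem_Iic] at hy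
    have h : ∀ n : ℕ, ∃ r ≤ t - n, ∃ z ∈ E.P t r A, d z y < 1 / (n + 1) := by
      intro n
      have hyn := hy (t - n) (sub_le_self t (Nat.cast_nonneg n))
      obtain ⟨v, hv, hconv⟩ := hyn
      obtain ⟨M, hM⟩ := hconv (1 / (n + 1)) (by positivity)
      have hvM := hv M
      simp only [Set.mem_iUnion, Set.mem_Iic] at hvM
      obtain ⟨r, hr, hz⟩ := hvM
      exact ⟨r, hr, v M, hz, hM M le_rfl⟩
    choose sn hsn z hz hd using h
    refine ⟨sn, hsn, z, hz, ?_⟩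
    intro ε hε
    obtain ⟨N, hN⟩ := exists_nat_one_div_lt hε
    refine ⟨N, fun n hn => ?_⟩
    calc d (z n) y < 1 / (n + 1) := hd n
      _ ≤ 1 / (N + 1) := by
          apply one_div_le_one_div_of_le (by positivity)
          have : (N : ℝ) ≤ (n : ℝ) := by exact_mod_cast hn
          linarith
      _ < ε := hN
  · rintro ⟨sn, hsn, x, hx, hconv⟩
    simp only [GES.Omega, Set.mem_iInter, Set.mem_Iic]
    intro s hs
    refine ⟨fun k => x (k + ⌈t - s⌉₊), ?_, conv_tail hconv _⟩
    intro k
    simp only [Set.mem_iUnion, Set.mem_Iic]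
    refine ⟨sn (k + ⌈t - s⌉₊), ?_, hx (k + ⌈t - s⌉₊)⟩
    have h1 : sn (k + ⌈t - s⌉₊) ≤ t - (k + ⌈t - s⌉₊ : ℕ) := hsn _
    have h2 : t - s ≤ (⌈t - s⌉₊ : ℝ) := Nat.le_ceil _
    have h3 : ((⌈t - s⌉₊ : ℕ) : ℝ) ≤ ((k + ⌈t - s⌉₊ : ℕ) : ℝ) := by
      exact_mod_cast Nat.le_add_left _ k
    linarith

lemma key_sub (E : GES X) {ds : X → X → ℝ} (hpac : E.PullbackAsympCompact ds)
    (A : Set X) (t : ℝ) (sn : ℕ → ℝ) (x : ℕ → X)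
    (hsn : ∀ n, sn n ≤ t - n) (hx : ∀ n, x n ∈ E.P t (sn n) A) :
    ∃ y ∈ limitSet E ds A t, ∃ φ : ℕ → ℕ, StrictMono φ ∧ Conv ds (x ∘ φ) y := by
  have hsn' : ∀ n, sn n ≤ t := fun n => le_trans (hsn n) (sub_le_self t (Nat.cast_nonneg n))
  have htend : Filter.Tendsto sn Filter.atTop Filter.atBot := by
    apply tendsto_atBot_mono hsn
    apply Filter.tendsto_atBot.2
    intro b
    refine Filter.eventually_atTop.2 ⟨⌈t - b⌉₊, fun n hn => ?_⟩
    have h1 : t - b ≤ (⌈t - b⌉₊ : ℝ) := Nat.le_ceil _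
    have h2 : ((⌈t - b⌉₊ : ℕ) : ℝ) ≤ (n : ℝ) := by exact_mod_cast hn
    linarith
  have hx' : ∀ n, x n ∈ E.P t (sn n) Set.univ := by
    intro n; obtain ⟨u, hu, _, hut⟩ := hx n; exact ⟨u, hu, trivial, hut⟩
  obtain ⟨y, φ, hφ, hconv⟩ := hpac t sn hsn' htend x hx'
  refine ⟨y, ⟨sn ∘ φ, ?_, x ∘ φ, fun n => hx (φ n), hconv⟩, φ, hφ, hconv⟩
  intro n
  have h1 := hsn (φ n)
  have h2 : (n : ℝ) ≤ (φ n : ℝ) := by exact_mod_cast hφ.le_apply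
  simp only [Function.comp_apply]
  linarith

end Aux

/-- if `E` is pullback asymptotically compact and trajectories
pass through `A` at every time, then `Ω_s(A,t)` is nonempty, strongly compact,
strongly pullback attracts `A`, and `Ω_s(A,t) = Ω_w(A,t)`. -/
theorem stmt8 {X : Type*} (E : GES X) (ds dw : X → X → ℝ)
    (hds : IsMetric ds) (hdw : IsMetric dw)
    (hcompact : SeqCompactIn dw (Set.univ : Set X))
    (H : ∀ u v : ℕ → X, DistTendsZero ds u v → DistTendsZero dw u v)
    (hpac : E.PullbackAsympCompact ds)
    (A : Set X) (hA : ∀ t r : ℝ, r ≤ t → ∃ u ∈ E.traj r, u t ∈ A) (t : ℝ) :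
    (E.Omega ds A t).Nonempty ∧ SeqCompactIn ds (E.Omega ds A t) ∧
    (∀ ε > 0, ∃ s0 ≤ t, ∀ s ≤ s0, ∀ x ∈ E.P t s A,
      ∃ a ∈ E.Omega ds A t, ds x a < ε) ∧
    E.Omega ds A t = E.Omega dw A t := by
  have hLs := omega_eq_limitSet E ds A t
  have hLw := omega_eq_limitSet E dw A t
  have hbase : ∀ n : ℕ, ∃ z, z ∈ E.P t (t - n) A := by
    intro n
    obtain ⟨u, hu, huA⟩ := hA (t - n) (t - n) le_rfl
    exact ⟨u t, u, hu, huA, rfl⟩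
  choose z0 hz0 using hbase
  obtain ⟨y0, hy0, -⟩ := key_sub E hpac A t (fun n => t - n) z0 (fun n => le_rfl) hz0
  refine ⟨⟨y0, hLs ▸ hy0⟩, ?_, ?_, ?_⟩
  · -- compactness
    intro u hu
    have h : ∀ n : ℕ, ∃ r ≤ t - n, ∃ z ∈ E.P t r A, ds z (u n) < 1 / (n + 1) := by
      intro n
      have hun := hu n
      rw [hLs] at hun
      obtain ⟨sn, hsn, x, hx, hconv⟩ := hun
      obtain ⟨M, hM⟩ := hconv (1 / (n + 1)) (by positivity)
      refine ⟨sn (max M n), ?_, x (max M n), hx _, hM _ (le_max_left _ _)⟩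
      have h1 := hsn (max M n)
      have h2 : (n : ℝ) ≤ ((max M n : ℕ) : ℝ) := by exact_mod_cast le_max_right M n
      linarith
    choose r hr z hz hd using h
    obtain ⟨y, hy, φ, hφ, hconv⟩ := key_sub E hpac A t r z hr hz
    refine ⟨y, hLs ▸ hy, φ, hφ, ?_⟩
    intro ε hε
    obtain ⟨N1, hN1⟩ := exists_nat_one_div_lt (half_pos hε)
    obtain ⟨N2, hN2⟩ := hconv (ε / 2) (half_pos hε)
    refine ⟨max N1 N2, fun n hn => ?_⟩
    have hφn : N1 ≤ φ n := le_trans (le_trans (le_max_left _ _) hn) hφ.le_apply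
    have h1 : ds (u (φ n)) (z (φ n)) < ε / 2 := by
      rw [hds.2.2.1]
      calc ds (z (φ n)) (u (φ n)) < 1 / (φ n + 1) := hd (φ n)
        _ ≤ 1 / (N1 + 1) := by
            apply one_div_le_one_div_of_le (by positivity)
            have : (N1 : ℝ) ≤ (φ n : ℝ) := by exact_mod_cast hφn
            linarith
        _ < ε / 2 := hN1
    have h2 : ds (z (φ n)) y < ε / 2 := hN2 n (le_trans (le_max_right _ _) hn)
    have h3 : ds (u (φ n)) y ≤ ds (u (φ n)) (z (φ n)) + ds (z (φ n)) y := hds.2.2.2 _ _ _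
    simp only [Function.comp_apply]
    linarith
  · -- attraction
    intro ε hε
    by_contra hcon
    push_neg at hcon
    have h : ∀ n : ℕ, ∃ s ≤ t - n, ∃ x ∈ E.P t s A, ∀ a ∈ E.Omega ds A t, ε ≤ ds x a :=
      fun n => hcon (t - n) (sub_le_self t (Nat.cast_nonneg n))
    choose sn hsn x hx hfar using h
    obtain ⟨y, hy, φ, hφ, hconv⟩ := key_sub E hpac A t sn x hsn hx
    obtain ⟨N, hN⟩ := hconv ε hε
    have h1 := hfar (φ N) y (hLs ▸ hy)
    have h2 := hN N le_rfl
    simp only [Function.comp_apply] at h2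
    linarith
  · -- equality of omega limits
    rw [hLs, hLw]
    ext y
    constructor
    · rintro ⟨sn, hsn, x, hx, hconv⟩
      exact ⟨sn, hsn, x, hx, H x (fun _ => y) hconv⟩
    · rintro ⟨sn, hsn, x, hx, hconv⟩
      obtain ⟨z, hz, φ, hφ, hconvs⟩ := key_sub E hpac A t sn x hsn hx
      have h1 : Conv dw (x ∘ φ) z := H (x ∘ φ) (fun _ => z) hconvs
      have h2 : Conv dw (x ∘ φ) y := conv_subseq hconv hφ
      have hyz : y = z := by
        have hz0 : dw y z = 0 := by
          by_contra h0
          have hpos : 0 < dw y z := lt_of_le_of_ne (hdw.1 y z) (Ne.symm h0)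
          obtain ⟨N1, hN1⟩ := h1 (dw y z / 2) (by linarith)
          obtain ⟨N2, hN2⟩ := h2 (dw y z / 2) (by linarith)
          have h3 := hN1 (max N1 N2) (le_max_left _ _)
          have h4 := hN2 (max N1 N2) (le_max_right _ _)
          have h5 : dw y z ≤ dw y ((x ∘ φ) (max N1 N2)) + dw ((x ∘ φ) (max N1 N2)) z :=
            hdw.2.2.2 _ _ _
          rw [hdw.2.2.1 y] at h5
          have h6 : dw y ((x ∘ φ) (max N1 N2)) = dw ((x ∘ φ) (max N1 N2)) y :=
            hdw.2.2.1 _ _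
          have h7 : dw z y = dw y z := hdw.2.2.1 _ _
          linarith
        exact (hdw.2.1 y z).1 hz0
      exact hyz ▸ hz
end
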